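/- The multiplication map m: ⋀V ⊗ ⋀V → ⋀V, v_I ⊗ v_J ↦ (-q)^{-π(I,J)} v_{I∪J} (for disjoint I, J, else 0), commutes with the operators E_i acting on ⋀V ⊗ ⋀V via the comultiplication formula Δ(E_i) = E_i ⊗ K_i K_{i+1}^{-1} + 1 ⊗ E_i; that is, m((E_i v_I) ⊗ (K_i K_{i+1}^{-1} v_J) + v_I ⊗ (E_i v_J)) = E_i (m(v_I ⊗ v_J)) for all subsets I, J. -/
import Mathlib


open Finsupp

/-- The field `Q(q)` of rational functions. -/
abbrev F := RatFunc ℚ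

noncomputable def q : F := RatFunc.X

/-- `π(I, J) = |{(i, j) ∈ I × J : i > j}|`. -/
def crossingPi (I J : Finset ℕ) : ℕ :=
  ((I ×ˢ J).filter (fun p => p.2 < p.1)).card

/-- `v_I · v_J = (-q)^{-π(I,J)} v_{I∪J}` if `I ∩ J = ∅`, else `0`. -/
noncomputable def mulBasis (I J : Finset ℕ) : Finset ℕ →₀ F :=
  if I ∩ J = ∅ then Finsupp.single (I ∪ J) ((-q) ^ (-(crossingPi I J : ℤ))) else 0

/-- The bilinear extension of the product to `⋀V`. -/
noncomputable def wedgeMul (f g : Finset ℕ →₀ F) : Finset ℕ →₀ F :=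
  f.sum fun I a => g.sum fun J b => (a * b) • mulBasis I J

/-- `E_i v_I = v_{(I\{i+1})∪{i}}` if `i+1 ∈ I` and `i ∉ I`, else `0`. -/
noncomputable def Eop (i : ℕ) : (Finset ℕ →₀ F) →ₗ[F] (Finset ℕ →₀ F) :=
  Finsupp.lift (Finset ℕ →₀ F) F (Finset ℕ) fun I =>
    if i + 1 ∈ I ∧ i ∉ I then Finsupp.single (insert i (I.erase (i + 1))) (1 : F) else 0

/-- `K_i v_I = q v_I` if `i ∈ I`, else `v_I`. -/
noncomputable def Kop (i : ℕ) : (Finset ℕ →₀ F) →ₗ[F] (Finset ℕ →₀ F) :=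
  Finsupp.lift (Finset ℕ →₀ F) F (Finset ℕ) fun I =>
    Finsupp.single I (if i ∈ I then q else 1)

/-- `K_i⁻¹ v_I = q⁻¹ v_I` if `i ∈ I`, else `v_I`. -/
noncomputable def Kinv (i : ℕ) : (Finset ℕ →₀ F) →ₗ[F] (Finset ℕ →₀ F) :=
  Finsupp.lift (Finset ℕ →₀ F) F (Finset ℕ) fun I =>
    Finsupp.single I (if i ∈ I then q⁻¹ else 1)

/- ### Auxiliary lemmas -/

lemma Eop_single (i : ℕ) (S : Finset ℕ) (c : F) :
    Eop i (Finsupp.single S c) =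
      c • (if i + 1 ∈ S ∧ i ∉ S then Finsupp.single (insert i (S.erase (i + 1))) (1 : F) else 0) := by
  simp [Eop, Finsupp.lift_apply, Finsupp.sum_single_index]

lemma KK_single (i : ℕ) (J : Finset ℕ) :
    Kop i (Kinv (i + 1) (Finsupp.single J 1)) =
      Finsupp.single J ((if i + 1 ∈ J then q⁻¹ else 1) * (if i ∈ J then q else 1)) := by
  simp [Kop, Kinv, Finsupp.lift_apply, Finsupp.sum_single_index, Finsupp.smul_single]

lemma wedgeMul_single_single (I J : Finset ℕ) (a b : F) :
    wedgeMul (Finsupp.single I a) (Finsupp.single J b) = (a * b) • mulBasis I J := by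
  unfold wedgeMul
  rw [Finsupp.sum_single_index, Finsupp.sum_single_index]
  · simp
  · rw [Finsupp.sum_single_index] <;> simp

lemma wedgeMul_zero_left (g : Finset ℕ →₀ F) : wedgeMul 0 g = 0 := by
  unfold wedgeMul; exact Finsupp.sum_zero_index

lemma wedgeMul_zero_right (f : Finset ℕ →₀ F) : wedgeMul f 0 = 0 := by
  unfold wedgeMul; simp [Finsupp.sum_zero_index]

lemma crossingPi_eq (I J : Finset ℕ) :
    crossingPi I J = ∑ a ∈ I, (J.filter (fun j => j < a)).card := by
  unfold crossingPi
  rw [Finset.card_filter, Finset.sum_product]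
  refine Finset.sum_congr rfl fun a _ => ?_
  rw [Finset.card_filter]

lemma crossingPi_insert_left (a : ℕ) (S J : Finset ℕ) (ha : a ∉ S) :
    crossingPi (insert a S) J = crossingPi S J + (J.filter (fun j => j < a)).card := by
  rw [crossingPi_eq, crossingPi_eq, Finset.sum_insert ha, add_comm]

lemma crossingPi_insert_right (b : ℕ) (I T : Finset ℕ) (hb : b ∉ T) :
    crossingPi I (insert b T) = crossingPi I T + (I.filter (fun a => b < a)).card := by
  rw [crossingPi_eq, crossingPi_eq, Finset.card_filter, ← Finset.sum_add_distrib]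
  refine Finset.sum_congr rfl fun a _ => ?_
  rw [Finset.filter_insert]
  by_cases h : b < a
  · rw [if_pos h, if_pos h, Finset.card_insert_of_notMem (fun hm => hb (Finset.mem_filter.1 hm).1)]
  · rw [if_neg h, if_neg h, add_zero]

lemma filter_lt_succ (i : ℕ) (J : Finset ℕ) (h : i ∉ J) :
    J.filter (fun j => j < i + 1) = J.filter (fun j => j < i) := by
  apply Finset.filter_congr
  intro j hj
  have : j ≠ i := fun e => h (e ▸ hj)
  omega

lemma filter_succ_lt (i : ℕ) (I : Finset ℕ) (h : i + 1 ∉ I) :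
    I.filter (fun a => i < a) = I.filter (fun a => i + 1 < a) := by
  apply Finset.filter_congr
  intro a ha
  have : a ≠ i + 1 := fun e => h (e ▸ ha)
  omega

/-- Moving `i+1 → i` within the left factor doesn't change crossings, provided `i ∉ J`. -/
lemma pi_move_left (i : ℕ) (I J : Finset ℕ) (hI1 : i + 1 ∈ I) (hIi : i ∉ I) (hJi : i ∉ J) :
    crossingPi (insert i (I.erase (i + 1))) J = crossingPi I J := by
  set I₀ := I.erase (i + 1) with hI₀
  have h1 : i ∉ I₀ := fun h => hIi (Finset.mem_of_mem_erase h)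
  have h2 : i + 1 ∉ I₀ := Finset.notMem_erase _ _
  have hins : I = insert (i + 1) I₀ := (Finset.insert_erase hI1).symm
  rw [crossingPi_insert_left i I₀ J h1]
  conv_rhs => rw [hins]
  rw [crossingPi_insert_left (i + 1) I₀ J h2, filter_lt_succ i J hJi]

/-- Moving `i+1 → i` within the right factor doesn't change crossings, provided `i+1 ∉ I`. -/
lemma pi_move_right (i : ℕ) (I J : Finset ℕ) (hJ1 : i + 1 ∈ J) (hJi : i ∉ J) (hI1 : i + 1 ∉ I) :
    crossingPi I (insert i (J.erase (i + 1))) = crossingPi I J := by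
  set J₀ := J.erase (i + 1) with hJ₀
  have h1 : i ∉ J₀ := fun h => hJi (Finset.mem_of_mem_erase h)
  have h2 : i + 1 ∉ J₀ := Finset.notMem_erase _ _
  have hins : J = insert (i + 1) J₀ := (Finset.insert_erase hJ1).symm
  rw [crossingPi_insert_right i I J₀ h1]
  conv_rhs => rw [hins]
  rw [crossingPi_insert_right (i + 1) I J₀ h2, filter_succ_lt i I hI1]

/-- Cancellation case: `π(I, J') = π(I', J) + 1` when `i+1 ∈ I ∩ J` and `i ∉ I ∪ J`. -/
lemma pi_cancel (i : ℕ) (I J : Finset ℕ) (hI1 : i + 1 ∈ I) (hIi : i ∉ I)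
    (hJ1 : i + 1 ∈ J) (hJi : i ∉ J) :
    crossingPi I (insert i (J.erase (i + 1))) =
      crossingPi (insert i (I.erase (i + 1))) J + 1 := by
  set I₀ := I.erase (i + 1) with hI₀d
  set J₀ := J.erase (i + 1) with hJ₀d
  have hiI₀ : i ∉ I₀ := fun h => hIi (Finset.mem_of_mem_erase h)
  have hi1I₀ : i + 1 ∉ I₀ := Finset.notMem_erase _ _
  have hiJ₀ : i ∉ J₀ := fun h => hJi (Finset.mem_of_mem_erase h)
  have hi1J₀ : i + 1 ∉ J₀ := Finset.notMem_erase _ _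
  have hinsI : I = insert (i + 1) I₀ := (Finset.insert_erase hI1).symm
  have hinsJ : J = insert (i + 1) J₀ := (Finset.insert_erase hJ1).symm
  -- LHS
  have lhs : crossingPi I (insert i J₀) =
      crossingPi I₀ J₀ + (I₀.filter (fun a => i < a)).card +
        ((J₀.filter (fun j => j < i)).card + 1) := by
    conv_lhs => rw [hinsI]
    rw [crossingPi_insert_left (i + 1) I₀ (insert i J₀) hi1I₀,
      crossingPi_insert_right i I₀ J₀ hiJ₀,
      Finset.filter_insert, if_pos (by omega : i < i + 1),
      Finset.card_insert_of_notMem (fun hm => hiJ₀ (Finset.mem_filter.1 hm).1),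
      filter_lt_succ i J₀ hiJ₀]
  -- RHS
  have rhs : crossingPi (insert i I₀) J =
      crossingPi I₀ J₀ + (I₀.filter (fun a => i < a)).card +
        (J₀.filter (fun j => j < i)).card := by
    conv_lhs => rw [hinsJ]
    rw [crossingPi_insert_left i I₀ (insert (i + 1) J₀) hiI₀,
      crossingPi_insert_right (i + 1) I₀ J₀ hi1J₀,
      Finset.filter_insert, if_neg (by omega : ¬ (i + 1 < i)),
      filter_succ_lt i I₀ hi1I₀]
  rw [lhs, rhs]
  omega

lemma inter_empty_iff (S T : Finset ℕ) : S ∩ T = ∅ ↔ ∀ x ∈ S, x ∉ T := by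
  rw [Finset.eq_empty_iff_forall_notMem]
  simp [Finset.mem_inter, not_and]

lemma neg_q_zpow_ne (k : ℤ) : ((-q : F)) ^ k ≠ 0 :=
  zpow_ne_zero _ (neg_ne_zero.2 RatFunc.X_ne_zero)

/-- The multiplication map of `⋀V` commutes with the action of `E_i` on `⋀V ⊗ ⋀V` given by
`Δ(E_i) = E_i ⊗ K_i K_{i+1}⁻¹ + 1 ⊗ E_i`:
`m((E_i v_I) ⊗ (K_i K_{i+1}⁻¹ v_J) + v_I ⊗ (E_i v_J)) = E_i (m(v_I ⊗ v_J))`. -/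
theorem wedgeMul_E_intertwiner (n : ℕ) (i : ℕ) (hi1 : 1 ≤ i) (hi2 : i ≤ n - 1)
    (I J : Finset ℕ) (hI : I ⊆ Finset.Icc 1 n) (hJ : J ⊆ Finset.Icc 1 n) :
    wedgeMul (Eop i (Finsupp.single I 1)) (Kop i (Kinv (i + 1) (Finsupp.single J 1))) +
        wedgeMul (Finsupp.single I 1) (Eop i (Finsupp.single J 1)) =
      Eop i (wedgeMul (Finsupp.single I 1) (Finsupp.single J 1)) := by
  classical
  have hq : (q : F) ≠ 0 := RatFunc.X_ne_zero
  rw [KK_single, Eop_single, Eop_single, wedgeMul_single_single I J 1 1]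
  simp only [one_smul, one_mul]
  set I' := insert i (I.erase (i + 1)) with hI'def
  set J' := insert i (J.erase (i + 1)) with hJ'def
  set κ : F := (if i + 1 ∈ J then q⁻¹ else 1) * (if i ∈ J then q else 1) with hκ
  by_cases c1 : i + 1 ∈ I ∧ i ∉ I
  · rw [if_pos c1]
    by_cases c3 : i + 1 ∈ J ∧ i ∉ J
    · -- both E's act: the cancellation case; also I ∩ J ≠ ∅ unless... i+1 ∈ I ∩ J so not disjoint
      rw [if_pos c3]
      have hnd : ¬ (I ∩ J = ∅) := fun h =>
        (inter_empty_iff I J).1 h (i + 1) c1.1 c3.1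
      rw [wedgeMul_single_single, wedgeMul_single_single]
      unfold mulBasis
      rw [if_neg hnd]
      simp only [map_zero]
      have hκval : κ = q⁻¹ := by rw [hκ, if_pos c3.1, if_neg c3.2, mul_one]
      by_cases h1 : I' ∩ J = ∅
      · -- cancellation
        have h2 : I ∩ J' = ∅ := by
          rw [inter_empty_iff]
          intro x hxI hxJ'
          rw [hJ'def, Finset.mem_insert, Finset.mem_erase] at hxJ'
          rcases hxJ' with rfl | ⟨hne, hxJ⟩
          · exact c1.2 hxI
          · -- x ∈ I ∩ J with x ≠ i+1 gives x ∈ I' ∩ J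
            have hxI' : x ∈ I' := by
              rw [hI'def, Finset.mem_insert, Finset.mem_erase]
              exact Or.inr ⟨hne, hxI⟩
            exact (inter_empty_iff I' J).1 h1 x hxI' hxJ
        rw [if_pos h1, if_pos h2]
        have hsets : I' ∪ J = I ∪ J' := by
          ext x
          simp only [hI'def, hJ'def, Finset.mem_union, Finset.mem_insert, Finset.mem_erase]
          constructor
          · rintro (⟨rfl | ⟨hne, hxI⟩⟩ | hxJ)
            · exact Or.inr (Or.inl rfl)
            · exact Or.inl hxI
            · by_cases hx : x = i + 1
              · exact Or.inl (hx ▸ c1.1)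
              · exact Or.inr (Or.inr ⟨hx, hxJ⟩)
          · rintro (hxI | ⟨rfl | ⟨hne, hxJ⟩⟩)
            · by_cases hx : x = i + 1
              · exact Or.inr (hx ▸ c3.1)
              · exact Or.inl (Or.inr ⟨hx, hxI⟩)
            · exact Or.inl (Or.inl rfl)
            · exact Or.inr hxJ
        have hpi : crossingPi I J' = crossingPi I' J + 1 :=
          pi_cancel i I J c1.1 c1.2 c3.1 c3.2
        rw [hsets, hpi, hκval, Finsupp.smul_single, Finsupp.smul_single, ← Finsupp.single_add]
        rw [Finsupp.single_eq_zero]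
        have hc : (-(↑(crossingPi I' J + 1)) : ℤ) = -(crossingPi I' J : ℤ) + (-1) := by
          push_cast; ring
        rw [hc, zpow_add₀ (neg_ne_zero.2 hq), zpow_neg_one, inv_neg]
        simp only [smul_eq_mul, one_mul, mul_one]
        ring
      · -- term1 zero forces term2 zero as well
        have h2 : ¬ (I ∩ J' = ∅) := by
          intro h2
          apply h1
          rw [inter_empty_iff]
          intro x hxI' hxJ
          rw [hI'def, Finset.mem_insert, Finset.mem_erase] at hxI'
          rcases hxI' with rfl | ⟨hne, hxI⟩
          · exact c3.2 hxJ
          · have hxJ' : x ∈ J' := by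
              by_cases hx : x = i + 1
              · exact absurd hx hne
              · rw [hJ'def, Finset.mem_insert, Finset.mem_erase]
                exact Or.inr ⟨hx, hxJ⟩
            exact (inter_empty_iff I J').1 h2 x hxI hxJ'
        rw [if_neg h1, if_neg h2]
        simp
    · -- only the first E acts
      rw [if_neg c3, wedgeMul_zero_right, add_zero, wedgeMul_single_single]
      by_cases hd : I ∩ J = ∅
      · have hiJ : i + 1 ∉ J := fun h => (inter_empty_iff I J).1 hd (i + 1) c1.1 h
        by_cases hiJ2 : i ∈ J
        · -- RHS zero since i ∈ I ∪ J; term1 zero since i ∈ I' ∩ J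
          have h1 : ¬ (I' ∩ J = ∅) := fun h =>
            (inter_empty_iff I' J).1 h i (by simp [hI'def]) hiJ2
          unfold mulBasis
          rw [if_neg h1, if_pos hd, Eop_single]
          rw [if_neg (by
            rintro ⟨-, hni⟩
            exact hni (Finset.mem_union_right I hiJ2))]
          simp
        · -- genuine case: I' disjoint from J, sets and π match
          have h1 : I' ∩ J = ∅ := by
            rw [inter_empty_iff]
            intro x hxI' hxJ
            rw [hI'def, Finset.mem_insert, Finset.mem_erase] at hxI'
            rcases hxI' with rfl | ⟨hne, hxI⟩
            · exact hiJ2 hxJ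
            · exact (inter_empty_iff I J).1 hd x hxI hxJ
          have hU : i + 1 ∈ I ∪ J ∧ i ∉ I ∪ J := by
            refine ⟨Finset.mem_union_left J c1.1, ?_⟩
            rw [Finset.mem_union]
            rintro (h | h)
            · exact c1.2 h
            · exact hiJ2 h
          unfold mulBasis
          rw [if_pos h1, if_pos hd, Eop_single, if_pos hU]
          have hκval : κ = 1 := by rw [hκ, if_neg hiJ, if_neg hiJ2, mul_one]
          have hsets : I' ∪ J = insert i ((I ∪ J).erase (i + 1)) := by
            rw [hI'def, Finset.erase_union_distrib, Finset.erase_eq_of_notMem hiJ,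
              Finset.insert_union]
          have hpi : crossingPi I' J = crossingPi I J :=
            pi_move_left i I J c1.1 c1.2 hiJ2
          rw [hκval, hsets, hpi]
          simp [Finsupp.smul_single, smul_eq_mul]
      · -- I ∩ J ≠ ∅ : RHS zero; term1 zero since I' ∩ J ≠ ∅
        have h1 : ¬ (I' ∩ J = ∅) := by
          intro h1
          apply hd
          rw [inter_empty_iff]
          intro x hxI hxJ
          by_cases hx : x = i + 1
          · subst hx
            -- i+1 ∈ J contradicts c3? no: c3 = ¬(i+1∈J ∧ i∉J); need i ∈ J then, then i ∈ I' ∩ J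
            by_cases hij : i ∈ J
            · exact (inter_empty_iff I' J).1 h1 i (by simp [hI'def]) hij
            · exact c3 ⟨hxJ, hij⟩
          · exact (inter_empty_iff I' J).1 h1 x
              (by rw [hI'def, Finset.mem_insert, Finset.mem_erase]; exact Or.inr ⟨hx, hxI⟩) hxJ
        unfold mulBasis
        rw [if_neg h1, if_neg hd]
        simp
  · rw [if_neg c1, wedgeMul_zero_left, zero_add]
    by_cases c3 : i + 1 ∈ J ∧ i ∉ J
    · rw [if_pos c3, wedgeMul_single_single]
      by_cases hd : I ∩ J = ∅
      · have hiI : i + 1 ∉ I := fun h => (inter_empty_iff I J).1 hd (i + 1) h c3.1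
        by_cases hiI2 : i ∈ I
        · have h2 : ¬ (I ∩ J' = ∅) := fun h =>
            (inter_empty_iff I J').1 h i hiI2 (by simp [hJ'def])
          unfold mulBasis
          rw [if_neg h2, if_pos hd, Eop_single]
          rw [if_neg (by
            rintro ⟨-, hni⟩
            exact hni (Finset.mem_union_left J hiI2))]
          simp
        · have h2 : I ∩ J' = ∅ := by
            rw [inter_empty_iff]
            intro x hxI hxJ'
            rw [hJ'def, Finset.mem_insert, Finset.mem_erase] at hxJ'
            rcases hxJ' with rfl | ⟨hne, hxJ⟩
            · exact hiI2 hxI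
            · exact (inter_empty_iff I J).1 hd x hxI hxJ
          have hU : i + 1 ∈ I ∪ J ∧ i ∉ I ∪ J := by
            refine ⟨Finset.mem_union_right I c3.1, ?_⟩
            rw [Finset.mem_union]
            rintro (h | h)
            · exact hiI2 h
            · exact c3.2 h
          unfold mulBasis
          rw [if_pos h2, if_pos hd, Eop_single, if_pos hU]
          have hsets : I ∪ J' = insert i ((I ∪ J).erase (i + 1)) := by
            rw [hJ'def, Finset.erase_union_distrib, Finset.erase_eq_of_notMem hiI,
              Finset.union_insert]
          have hpi : crossingPi I J' = crossingPi I J :=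
            pi_move_right i I J c3.1 c3.2 hiI
          rw [hsets, hpi]
          simp [Finsupp.smul_single, smul_eq_mul]
      · have h2 : ¬ (I ∩ J' = ∅) := by
          intro h2
          apply hd
          rw [inter_empty_iff]
          intro x hxI hxJ
          by_cases hx : x = i + 1
          · subst hx
            by_cases hij : i ∈ I
            · exact (inter_empty_iff I J').1 h2 i hij (by simp [hJ'def])
            · exact c1 ⟨hxI, hij⟩
          · exact (inter_empty_iff I J').1 h2 x hxI
              (by rw [hJ'def, Finset.mem_insert, Finset.mem_erase]; exact Or.inr ⟨hx, hxJ⟩)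
        unfold mulBasis
        rw [if_neg h2, if_neg hd]
        simp
    · -- neither E acts on I nor J
      rw [if_neg c3, wedgeMul_zero_right]
      unfold mulBasis
      by_cases hd : I ∩ J = ∅
      · rw [if_pos hd, Eop_single]
        rw [if_neg (by
          rintro ⟨hmem, hni⟩
          rw [Finset.mem_union] at hmem hni
          push_neg at hni
          rcases hmem with h | h
          · exact c1 ⟨h, hni.1⟩
          · exact c3 ⟨h, hni.2⟩)]
        simp
      · rw [if_neg hd]
        simp
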